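/- Let $P$ be a real polynomial of degree $n \ge 1$ satisfying the equioscillation property of modulus 1 on $[0,a]$ with nodes $0 \le t_0 < \cdots < t_n \le a$. Then $P$ is strictly positive and strictly decreasing on $(-\infty, t_0)$. -/

import Mathlib

open Polynomial

/-- a degree-`n ≥ 1` polynomial with the equioscillation property of modulus 1
on `[0,a]` is strictly positive and strictly decreasing on `(-∞, t 0)`. -/
theorem stmt_3 (n : ℕ) (hn : 1 ≤ n) (a : ℝ) (P : ℝ[X]) (hdeg : P.natDegree = n)
    (t : Fin (n + 1) → ℝ) (ht0 : 0 ≤ t 0) (htmono : StrictMono t) (hta : t (Fin.last n) ≤ a)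
    (hP : ∀ i : Fin (n + 1), P.eval (t i) = (-1 : ℝ) ^ (i : ℕ)) :
    (∀ x : ℝ, x < t 0 → 0 < P.eval x) ∧
      StrictAntiOn (fun x => P.eval x) (Set.Iio (t 0)) := by
  have hne : NeZero n := ⟨by omega⟩
  -- Step 1: a root in each interval (t i, t (i+1))
  have hroot : ∀ i : Fin n, ∃ x ∈ Set.Ioo (t i.castSucc) (t i.succ), P.eval x = 0 := by
    intro i
    have hlt : t i.castSucc < t i.succ := htmono (Fin.castSucc_lt_succ : i.castSucc < i.succ)
    have hc : ContinuousOn (fun x => P.eval x) (Set.Icc (t i.castSucc) (t i.succ)) :=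
      P.continuous.continuousOn
    have hu : P.eval (t i.castSucc) = (-1 : ℝ) ^ (i : ℕ) := by
      have := hP i.castSucc; simpa using this
    have hv : P.eval (t i.succ) = (-1 : ℝ) ^ ((i : ℕ) + 1) := by
      have := hP i.succ; simpa using this
    rcases Nat.even_or_odd (i : ℕ) with he | ho
    · have hu' : P.eval (t i.castSucc) = 1 := by rw [hu, he.neg_one_pow]
      have hv' : P.eval (t i.succ) = -1 := by
        rw [hv, Odd.neg_one_pow]; exact he.add_one
      have h0 : (0 : ℝ) ∈ Set.Ioo (P.eval (t i.succ)) (P.eval (t i.castSucc)) := by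
        rw [hu', hv']; constructor <;> norm_num
      have := intermediate_value_Ioo' hlt.le hc h0
      obtain ⟨x, hx, hx0⟩ := this
      exact ⟨x, hx, hx0⟩
    · have hu' : P.eval (t i.castSucc) = -1 := by rw [hu, ho.neg_one_pow]
      have hv' : P.eval (t i.succ) = 1 := by
        rw [hv, Even.neg_one_pow]; exact ho.add_one
      have h0 : (0 : ℝ) ∈ Set.Ioo (P.eval (t i.castSucc)) (P.eval (t i.succ)) := by
        rw [hu', hv']; constructor <;> norm_num
      have := intermediate_value_Ioo hlt.le hc h0
      obtain ⟨x, hx, hx0⟩ := this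
      exact ⟨x, hx, hx0⟩
  choose r hr hr0 using hroot
  -- roots are strictly monotone, all > t 0
  have hrmono : StrictMono r := by
    intro i j hij
    have h1 : r i < t i.succ := (hr i).2
    have h2 : t j.castSucc < r j := (hr j).1
    have h3 : t i.succ ≤ t j.castSucc := by
      apply htmono.monotone
      have hij' : (i : ℕ) < (j : ℕ) := hij
      rw [Fin.le_def, Fin.val_succ, Fin.coe_castSucc]
      omega
    linarith
  have hrgt : ∀ i : Fin n, t 0 < r i := by
    intro i
    have h1 : t 0 ≤ t i.castSucc := htmono.monotone (Fin.zero_le _)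
    linarith [(hr i).1]
  have hP0 : P ≠ 0 := by
    intro h; rw [h] at hdeg; simp at hdeg; omega
  -- the multiset of roots
  set M : Multiset ℝ := Multiset.map r Finset.univ.val with hM
  have hMcard : M.card = n := by simp [hM]
  have hMnodup : M.Nodup := by
    rw [hM]
    exact Finset.univ.nodup.map hrmono.injective
  have hMle : M ≤ P.roots := by
    rw [Multiset.le_iff_subset hMnodup]
    intro x hx
    rw [hM] at hx
    simp only [Multiset.mem_map, Finset.mem_val, Finset.mem_univ, true_and] at hx
    obtain ⟨i, rfl⟩ := hx
    rw [Polynomial.mem_roots']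
    exact ⟨hP0, by simpa [Polynomial.IsRoot] using hr0 i⟩
  have hrc : Multiset.card P.roots = P.natDegree := by
    have h1 : Multiset.card P.roots ≤ P.natDegree := P.card_roots' 
    have h2 : n ≤ Multiset.card P.roots := by
      rw [← hMcard]; exact Multiset.card_le_card hMle
    omega
  have hMeq : P.roots = M := (Multiset.eq_of_le_of_card_le hMle (by rw [hMcard, hrc, hdeg])).symm
  have hfacP := P.C_leadingCoeff_mul_prod_multiset_X_sub_C hrc
  set c := P.leadingCoeff with hc
  have hfac : ∀ x : ℝ, P.eval x = c * ∏ i : Fin n, (x - r i) := by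
    intro x
    conv_lhs => rw [← hfacP]
    rw [Polynomial.eval_mul, Polynomial.eval_C, Polynomial.eval_multiset_prod, hMeq, hM,
      Multiset.map_map, Multiset.map_map, Finset.prod_eq_multiset_prod]
    congr 1
    congr 1
    apply Multiset.map_congr rfl
    intro i _
    simp
  -- rewrite with positive factors
  have hswap : ∀ x : ℝ, (∏ i : Fin n, (x - r i)) = (-1 : ℝ) ^ n * ∏ i : Fin n, (r i - x) := by
    intro x
    have hpow : ((-1 : ℝ)) ^ n = ∏ _i : Fin n, (-1 : ℝ) := by simp
    rw [hpow, ← Finset.prod_mul_distrib]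
    exact Finset.prod_congr rfl fun i _ => by ring
  have hfac' : ∀ x : ℝ, P.eval x = (c * (-1 : ℝ) ^ n) * ∏ i : Fin n, (r i - x) := by
    intro x; rw [hfac x, hswap x]; ring
  -- the key sign
  have hg0 : 0 < ∏ i : Fin n, (r i - t 0) := Finset.prod_pos fun i _ => sub_pos.2 (hrgt i)
  have h1 : (1 : ℝ) = (c * (-1 : ℝ) ^ n) * ∏ i : Fin n, (r i - t 0) := by
    have := hfac' (t 0)
    rw [hP 0] at this
    simpa using this
  have hcpos : 0 < c * (-1 : ℝ) ^ n := by
    by_contra h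
    push_neg at h
    nlinarith
  constructor
  · intro x hx
    rw [hfac' x]
    exact mul_pos hcpos (Finset.prod_pos fun i _ => sub_pos.2 (lt_trans hx (hrgt i)))
  · intro x hx y hy hxy
    simp only [Set.mem_Iio] at hx hy
    simp only
    rw [hfac' x, hfac' y]
    apply mul_lt_mul_of_pos_left _ hcpos
    apply Finset.prod_lt_prod_of_nonempty
    · intro i _
      exact sub_pos.2 (lt_trans hy (hrgt i))
    · intro i _
      linarith
    · exact Finset.univ_nonempty
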